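/- Let the gbit model be the probabilistic model with A = ℝ³, positive cone A₊ = {(s, a, b) ∈ ℝ³ : |a| + |b| ≤ s}, and unit effect u_A = (1, 0, 0); under the dot-product identification of A* with ℝ³, its dual cone is A₊* = {(t, x, y) : max(|x|, |y|) ≤ t}, whose normalized states form a square. Then for every n ∈ ℕ, there exists no embedding of the gbit model into the classical model C_n. -/

import Mathlib

/-- Let the gbit model be the probabilistic model with `A = ℝ³`,
positive cone `A₊ = {(s, a, b) : |a| + |b| ≤ s}` and unit effect `u_A = (1, 0, 0)`;
under the dot-product identification of `A*` with `ℝ³` its dual cone is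
`A₊* = {(t, x, y) : max(|x|, |y|) ≤ t}`, whose normalized states form a square.  Then
for every `n`, there is no embedding of the gbit model into the classical model `C_n`
(whose cone is the nonnegative orthant, whose unit effect is `(1, …, 1)`, and whose
dual is identified with `ℝⁿ` via the dot product). -/
theorem gbit_no_classical_embedding (n : ℕ) :
    ¬ ∃ φ ψ : (Fin 3 → ℝ) →ₗ[ℝ] (Fin n → ℝ),
      (∀ e : Fin 3 → ℝ, |e 1| + |e 2| ≤ e 0 → ∀ i, 0 ≤ φ e i)
      ∧ (∀ ω : Fin 3 → ℝ, max |ω 1| |ω 2| ≤ ω 0 → ∀ i, 0 ≤ ψ ω i)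
      ∧ φ ![1, 0, 0] = (fun _ => 1)
      ∧ (∀ ω e : Fin 3 → ℝ, ∑ i, ψ ω i * φ e i = ∑ j, ω j * e j) := by
  rintro ⟨φ, ψ, hφ, hψ, hu, hd⟩
  set a : Fin 3 → ℝ := ![1/2, 1/2, 0] with ha
  set a' : Fin 3 → ℝ := ![1/2, -1/2, 0] with ha'
  set b : Fin 3 → ℝ := ![1/2, 0, 1/2] with hb
  set ω₁ : Fin 3 → ℝ := ![1, 1, 1] with hω₁
  set ω₂ : Fin 3 → ℝ := ![1, 1, -1] with hω₂
  set ω₃ : Fin 3 → ℝ := ![1, -1, -1] with hω₃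
  set ω₄ : Fin 3 → ℝ := ![1, -1, 1] with hω₄
  have hq0 : ∀ i, 0 ≤ φ a i := hφ a (by norm_num [ha, abs_le, Matrix.cons_val_two])
  have hr0 : ∀ i, 0 ≤ φ b i := hφ b (by norm_num [hb, abs_le, Matrix.cons_val_two])
  have hq1 : ∀ i, φ a i ≤ 1 := by
    intro i
    have h := hφ a' (by norm_num [ha', abs_le, Matrix.cons_val_two]) i
    have heq : a' = ![1, 0, 0] - a := by
      funext j; fin_cases j <;> simp [ha, ha'] <;> norm_num
    rw [heq, map_sub, hu] at h
    have : (0:ℝ) ≤ 1 - φ a i := by simpa using h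
    linarith
  have hp1 : ∀ i, 0 ≤ ψ ω₁ i := hψ ω₁ (by norm_num [hω₁, Matrix.cons_val_two])
  have hp2 : ∀ i, 0 ≤ ψ ω₂ i := hψ ω₂ (by norm_num [hω₂, Matrix.cons_val_two])
  have hp3 : ∀ i, 0 ≤ ψ ω₃ i := hψ ω₃ (by norm_num [hω₃, Matrix.cons_val_two])
  have hp4 : ∀ i, 0 ≤ ψ ω₄ i := hψ ω₄ (by norm_num [hω₄, Matrix.cons_val_two])
  have hsum1 : ∑ i, ψ ω₁ i = 1 := by
    have h := hd ω₁ ![1, 0, 0]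
    rw [hu] at h
    simpa [Fin.sum_univ_three, hω₁] using h
  have h1a : ∑ i, ψ ω₁ i * φ a i = 1 := by
    have h := hd ω₁ a
    rw [h]; norm_num [Fin.sum_univ_three, hω₁, ha, Matrix.cons_val_two]
  have h1b : ∑ i, ψ ω₁ i * φ b i = 1 := by
    have h := hd ω₁ b
    rw [h]; norm_num [Fin.sum_univ_three, hω₁, hb, Matrix.cons_val_two]
  have h2b : ∑ i, ψ ω₂ i * φ b i = 0 := by
    have h := hd ω₂ b
    rw [h]; norm_num [Fin.sum_univ_three, hω₂, hb, Matrix.cons_val_two]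
  have h4a : ∑ i, ψ ω₄ i * φ a i = 0 := by
    have h := hd ω₄ a
    rw [h]; norm_num [Fin.sum_univ_three, hω₄, ha, Matrix.cons_val_two]
  have hlin : ∀ i, ψ ω₁ i + ψ ω₃ i = ψ ω₂ i + ψ ω₄ i := by
    intro i
    have hω : ω₁ + ω₃ = ω₂ + ω₄ := by
      funext j; fin_cases j <;> simp [hω₁, hω₂, hω₃, hω₄]
    have h := congrArg ψ hω
    rw [map_add, map_add] at h
    have := congrFun h i
    simpa using this
  -- find an index where ψ ω₁ is positive
  obtain ⟨i, hi⟩ : ∃ i, 0 < ψ ω₁ i := by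
    by_contra h
    push_neg at h
    have : ∑ i, ψ ω₁ i = 0 :=
      Finset.sum_eq_zero fun i _ => le_antisymm (h i) (hp1 i)
    linarith [hsum1]
  -- q i = 1
  have hsub : ∑ j, ψ ω₁ j * (1 - φ a j) = 0 := by
    have : ∑ j, ψ ω₁ j * (1 - φ a j) = (∑ j, ψ ω₁ j) - ∑ j, ψ ω₁ j * φ a j := by
      rw [← Finset.sum_sub_distrib]
      congr 1; funext j; ring
    rw [this, hsum1, h1a]; ring
  have hqi : φ a i = 1 := by
    have hterm := (Finset.sum_eq_zero_iff_of_nonneg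
      (fun j _ => mul_nonneg (hp1 j) (by linarith [hq1 j]))).mp hsub i (Finset.mem_univ i)
    rcases mul_eq_zero.mp hterm with h | h
    · linarith
    · linarith
  have hsubb : ∑ j, ψ ω₁ j * (1 - φ b j) = 0 := by
    have hb1 : ∀ j, φ b j ≤ 1 := by
      intro j
      have heq : (![1/2, 0, -1/2] : Fin 3 → ℝ) = ![1, 0, 0] - b := by
        funext k; fin_cases k <;> simp [hb] <;> norm_num
      have h := hφ ![1/2, 0, -1/2] (by norm_num [abs_le, Matrix.cons_val_two]) j
      rw [heq, map_sub, hu] at h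
      have : (0:ℝ) ≤ 1 - φ b j := by simpa using h
      linarith
    have : ∑ j, ψ ω₁ j * (1 - φ b j) = (∑ j, ψ ω₁ j) - ∑ j, ψ ω₁ j * φ b j := by
      rw [← Finset.sum_sub_distrib]
      congr 1; funext j; ring
    rw [this, hsum1, h1b]; ring
  have hri : φ b i = 1 := by
    have hb1 : ∀ j, φ b j ≤ 1 := by
      intro j
      have heq : (![1/2, 0, -1/2] : Fin 3 → ℝ) = ![1, 0, 0] - b := by
        funext k; fin_cases k <;> simp [hb] <;> norm_num
      have h := hφ ![1/2, 0, -1/2] (by norm_num [abs_le, Matrix.cons_val_two]) j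
      rw [heq, map_sub, hu] at h
      have : (0:ℝ) ≤ 1 - φ b j := by simpa using h
      linarith
    have hterm := (Finset.sum_eq_zero_iff_of_nonneg
      (fun j _ => mul_nonneg (hp1 j) (by linarith [hb1 j]))).mp hsubb i (Finset.mem_univ i)
    rcases mul_eq_zero.mp hterm with h | h
    · linarith
    · linarith
  -- ψ ω₂ i = 0 and ψ ω₄ i = 0
  have h2i : ψ ω₂ i = 0 := by
    have hterm := (Finset.sum_eq_zero_iff_of_nonneg
      (fun j _ => mul_nonneg (hp2 j) (hr0 j))).mp h2b i (Finset.mem_univ i)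
    rcases mul_eq_zero.mp hterm with h | h
    · exact h
    · rw [hri] at h; norm_num at h
  have h4i : ψ ω₄ i = 0 := by
    have hterm := (Finset.sum_eq_zero_iff_of_nonneg
      (fun j _ => mul_nonneg (hp4 j) (hq0 j))).mp h4a i (Finset.mem_univ i)
    rcases mul_eq_zero.mp hterm with h | h
    · exact h
    · rw [hqi] at h; norm_num at h
  have := hlin i
  have := hp3 i
  linarith
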